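/- If X is uniformly distributed on Σⁿ and Y is a random variable with H(Y) ≤ K, and each coordinate X_i can be guessed from Y correctly with probability at least 1/2 + γ (for a binary alphabet), then n·h(1/2−γ) + K ≥ n, where h is the binary entropy function; consequently if K < n·(1 − h(1/2−γ)) we reach a contradiction, so such a Y cannot exist for n > K/(1−h(1/2−γ)). -/
import Mathlib

open Finset

/-- Shannon entropy (base 2) of a random variable `Z` on a finite probability
space with mass function `μ`. -/
noncomputable def entropy {Ω β : Type*} [Fintype Ω] [Fintype β] [DecidableEq β]
    (μ : Ω → ℝ) (Z : Ω → β) : ℝ :=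
  -∑ y : β, (∑ ω ∈ univ.filter (fun ω => Z ω = y), μ ω)
      * Real.logb 2 (∑ ω ∈ univ.filter (fun ω => Z ω = y), μ ω)

/-- Binary entropy function (base 2). -/
noncomputable def binEnt (p : ℝ) : ℝ :=
  -(p * Real.logb 2 p) - (1 - p) * Real.logb 2 (1 - p)

/-- Grouping a sum over the sample space into fibers of `Z`. -/
lemma grouping {Ω β : Type*} [Fintype Ω] [Fintype β] [DecidableEq β]
    (μ : Ω → ℝ) (Z : Ω → β) (f : β → ℝ) :
    ∑ ω, μ ω * f (Z ω)
      = ∑ z : β, (∑ ω ∈ univ.filter (fun ω => Z ω = z), μ ω) * f z := by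
  rw [← Finset.sum_fiberwise univ Z (fun ω => μ ω * f (Z ω))]
  refine Finset.sum_congr rfl fun z _ => ?_
  rw [Finset.sum_mul]
  refine Finset.sum_congr rfl fun ω hω => ?_
  rw [(Finset.mem_filter.1 hω).2]

/-- Core of Gibbs' inequality. -/
lemma gibbs_core {β : Type*} [Fintype β] (p q : β → ℝ)
    (hp0 : ∀ z, 0 ≤ p z) (hp1 : ∑ z, p z = 1) (hq0 : ∀ z, 0 ≤ q z)
    (hq1 : ∑ z, q z ≤ 1) (hqposz : ∀ z, p z ≠ 0 → 0 < q z) :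
    ∑ z, p z * Real.logb 2 (q z) ≤ ∑ z, p z * Real.logb 2 (p z) := by
  have hl2 : (0:ℝ) < Real.log 2 := Real.log_pos one_lt_two
  have key : ∀ z, p z * Real.logb 2 (q z) - p z * Real.logb 2 (p z)
      ≤ (q z - p z) / Real.log 2 := by
    intro z
    rcases eq_or_lt_of_le (hp0 z) with h0 | h0
    · rw [← h0]
      simp only [zero_mul, sub_zero, zero_sub, sub_self, neg_zero]
      exact div_nonneg (hq0 z) (Real.log_pos one_lt_two).le
    · have hqz : 0 < q z := hqposz z h0.ne'
      have hlog : Real.log (q z / p z) ≤ q z / p z - 1 :=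
        Real.log_le_sub_one_of_pos (div_pos hqz h0)
      rw [Real.log_div (ne_of_gt hqz) (ne_of_gt h0)] at hlog
      have h1 : p z * Real.log (q z) - p z * Real.log (p z) ≤ q z - p z := by
        have h2 := mul_le_mul_of_nonneg_left hlog h0.le
        have h3 : p z * (q z / p z) = q z := by field_simp
        nlinarith
      calc p z * Real.logb 2 (q z) - p z * Real.logb 2 (p z)
          = (p z * Real.log (q z) - p z * Real.log (p z)) / Real.log 2 := by
            rw [Real.logb, Real.logb]; ring
        _ ≤ (q z - p z) / Real.log 2 := by gcongr
  have hsum : ∑ z, ((q z - p z) / Real.log 2) ≤ 0 := by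
    rw [← Finset.sum_div, Finset.sum_sub_distrib, hp1]
    apply div_nonpos_of_nonpos_of_nonneg _ hl2.le
    linarith
  have := Finset.sum_le_sum (s := (univ : Finset β)) (fun z _ => key z)
  rw [Finset.sum_sub_distrib] at this
  linarith [hsum, this]

/-- Gibbs' inequality (cross-entropy bound). -/
lemma gibbs {Ω β : Type*} [Fintype Ω] [Fintype β] [DecidableEq β]
    (μ : Ω → ℝ) (hμ0 : ∀ ω, 0 ≤ μ ω) (hμ1 : ∑ ω, μ ω = 1)
    (Z : Ω → β) (q : β → ℝ) (hq0 : ∀ z, 0 ≤ q z) (hq1 : ∑ z, q z ≤ 1)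
    (hqpos : ∀ ω, μ ω ≠ 0 → 0 < q (Z ω)) :
    entropy μ Z ≤ -∑ ω, μ ω * Real.logb 2 (q (Z ω)) := by
  rw [grouping μ Z (fun z => Real.logb 2 (q z)), entropy, neg_le_neg_iff]
  apply gibbs_core
  · exact fun z => Finset.sum_nonneg fun ω _ => hμ0 ω
  · rw [Finset.sum_fiberwise univ Z μ]; exact hμ1
  · exact hq0
  · exact hq1
  · intro z hz
    obtain ⟨ω, hω, hμω⟩ := Finset.exists_ne_zero_of_sum_ne_zero hz
    have := hqpos ω hμω
    rwa [(Finset.mem_filter.1 hω).2] at this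

/-- If `X` is uniform on `{0,1}ⁿ`, `H(Y) ≤ K`, and each coordinate `X i` can be
guessed from `Y` with probability at least `1/2 + γ`, then
`n ≤ n · h(1/2 − γ)  + K`. -/
theorem stmt4 {Ω F : Type*} [Fintype Ω] [Fintype F] [DecidableEq F] (n : ℕ)
    (μ : Ω → ℝ) (hμ0 : ∀ ω, 0 ≤ μ ω) (hμ1 : ∑ ω, μ ω = 1)
    (X : Ω → (Fin n → Bool))
    (hX : ∀ x : Fin n → Bool, ∑ ω ∈ univ.filter (fun ω => X ω = x), μ ω = 1 / 2 ^ n)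
    (Y : Ω → F) (K γ : ℝ) (hγ0 : 0 < γ) (hγ1 : γ ≤ 1 / 2)
    (hK : entropy μ Y ≤ K)
    (g : Fin n → F → Bool)
    (hg : ∀ i : Fin n, 1 / 2 + γ ≤ ∑ ω ∈ univ.filter (fun ω => g i (Y ω) = X ω i), μ ω) :
    (n : ℝ) ≤ n * binEnt (1 / 2 - γ) + K := by
  classical
  set e : ℝ := 1 / 2 - γ with he
  set c : ℝ := 1 / 2 + γ with hc
  have he0 : 0 ≤ e := by rw [he]; linarith
  have hc0 : 0 < c := by rw [hc]; linarith
  have hce : c + e = 1 := by rw [hc, he]; ring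
  -- the guessing model distribution
  clear_value e c
  set r : Fin n → Bool → F → ℝ := fun i b y => if g i y = b then c else e with hr
  have hr0 : ∀ i b y, 0 ≤ r i b y := by
    intro i b y; rw [hr]; dsimp only; split <;> [exact hc0.le; exact he0]
  set pY : F → ℝ := fun y => ∑ ω ∈ univ.filter (fun ω => Y ω = y), μ ω with hpY
  have hpY0 : ∀ y, 0 ≤ pY y := fun y => Finset.sum_nonneg fun ω _ => hμ0 ω
  have hpY1 : ∑ y, pY y = 1 := by
    rw [hpY]; rw [Finset.sum_fiberwise univ Y μ]; exact hμ1
  set Z : Ω → (Fin n → Bool) × F := fun ω => (X ω, Y ω) with hZ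
  set q : (Fin n → Bool) × F → ℝ := fun p => pY p.2 * ∏ i, r i (p.1 i) p.2 with hq
  clear_value r pY Z q
  -- facts about positive-measure points
  have hwrong : ∀ (i : Fin n) (ω : Ω), ¬ (g i (Y ω) = X ω i) → μ ω ≤ e := by
    intro i ω hωw
    have hsplit := Finset.sum_filter_add_sum_filter_not (univ : Finset Ω)
      (fun ω => g i (Y ω) = X ω i) μ
    have hle : μ ω ≤ ∑ ω' ∈ univ.filter (fun ω' => ¬ (g i (Y ω') = X ω' i)), μ ω' :=
      Finset.single_le_sum (fun ω' _ => hμ0 ω') (by simp [hωw])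
    have := hg i
    rw [hμ1] at hsplit
    rw [he]; linarith
  have hμpos_correct : ∀ (i : Fin n) (ω : Ω), μ ω ≠ 0 → 0 < r i (X ω i) (Y ω) := by
    intro i ω hω
    rw [hr]; dsimp only; split
    · exact hc0
    · rcases lt_or_eq_of_le he0 with h | h
      · exact h
      · exfalso
        have := hwrong i ω (by assumption)
        have := (hμ0 ω).lt_of_ne (Ne.symm hω)
        linarith
  have hpYpos : ∀ ω, μ ω ≠ 0 → 0 < pY (Y ω) := by
    intro ω hω
    have h1 : μ ω ≤ pY (Y ω) := by
      rw [hpY]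
      exact Finset.single_le_sum (fun ω' _ => hμ0 ω') (by simp)
    have := (hμ0 ω).lt_of_ne (Ne.symm hω)
    linarith
  have hqpos : ∀ ω, μ ω ≠ 0 → 0 < q (Z ω) := by
    intro ω hω
    rw [hq, hZ]
    exact mul_pos (hpYpos ω hω) (Finset.prod_pos fun i _ => hμpos_correct i ω hω)
  -- q sums to 1
  have hq1 : ∑ z, q z ≤ 1 := by
    rw [hq]
    rw [Fintype.sum_prod_type]
    have : ∀ y : F, ∑ x : Fin n → Bool, ∏ i, r i (x i) y = 1 := by
      intro y
      have hpi : (Fintype.piFinset fun _ : Fin n => (univ : Finset Bool)) = univ :=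
        Fintype.piFinset_univ
      have hps := Finset.sum_prod_piFinset (univ : Finset Bool)
        (fun (i : Fin n) b => r i b y)
      rw [hpi] at hps
      rw [hps]
      apply Finset.prod_eq_one
      intro i _
      rw [Fintype.sum_bool, hr]
      dsimp only
      cases hgi : g i y <;> simp [hgi] <;> linarith [hce]
    calc ∑ x : Fin n → Bool, ∑ y, pY y * ∏ i, r i (x i) y
        = ∑ y, ∑ x : Fin n → Bool, pY y * ∏ i, r i (x i) y := Finset.sum_comm
      _ = ∑ y, pY y * ∑ x : Fin n → Bool, ∏ i, r i (x i) y := by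
          refine Finset.sum_congr rfl fun y _ => ?_; rw [Finset.mul_sum]
      _ = ∑ y, pY y := by
          refine Finset.sum_congr rfl fun y _ => ?_; rw [this y, mul_one]
      _ ≤ 1 := hpY1.le
  -- Gibbs
  have hgibbs := gibbs μ hμ0 hμ1 Z q
    (fun z => by rw [hq]
                 exact mul_nonneg (hpY0 z.2)
                   (Finset.prod_nonneg fun i _ => hr0 i (z.1 i) z.2))
    hq1 hqpos
  -- Step: n ≤ entropy μ Z
  have hlogn : Real.logb 2 ((1:ℝ) / 2 ^ n) = -(n : ℝ) := by
    rw [one_div, Real.logb_inv, Real.logb_pow, Real.logb_self_eq_one one_lt_two]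
    ring
  have hstep1 : (n : ℝ) ≤ entropy μ Z := by
    have hent : entropy μ Z = -∑ ω, μ ω * Real.logb 2
        (∑ ω' ∈ univ.filter (fun ω' => Z ω' = Z ω), μ ω') := by
      rw [entropy, grouping μ Z (fun z => Real.logb 2
        (∑ ω' ∈ univ.filter (fun ω' => Z ω' = z), μ ω'))]
    rw [hent]
    have hterm : ∀ ω, μ ω * Real.logb 2 (∑ ω' ∈ univ.filter (fun ω' => Z ω' = Z ω), μ ω')
        ≤ μ ω * Real.logb 2 ((1:ℝ) / 2 ^ n) := by
      intro ω
      rcases eq_or_ne (μ ω) 0 with h | h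
      · rw [h]; simp
      · have hμω := (hμ0 ω).lt_of_ne (Ne.symm h)
        have hsub : univ.filter (fun ω' => Z ω' = Z ω) ⊆
            univ.filter (fun ω' => X ω' = X ω) := by
          intro ω' hω'
          simp only [Finset.mem_filter, Finset.mem_univ, true_and, hZ, Prod.mk.injEq] at *
          exact hω'.1
        have hle : ∑ ω' ∈ univ.filter (fun ω' => Z ω' = Z ω), μ ω' ≤ (1:ℝ) / 2 ^ n := by
          rw [← hX (X ω)]
          exact Finset.sum_le_sum_of_subset_of_nonneg hsub (fun ω' _ _ => hμ0 ω')
        have hpos : 0 < ∑ ω' ∈ univ.filter (fun ω' => Z ω' = Z ω), μ ω' := by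
          have : μ ω ≤ ∑ ω' ∈ univ.filter (fun ω' => Z ω' = Z ω), μ ω' :=
            Finset.single_le_sum (fun ω' _ => hμ0 ω') (by simp)
          linarith
        exact mul_le_mul_of_nonneg_left
          (Real.logb_le_logb_of_le one_lt_two hpos hle) (hμ0 ω)
    have h2 : ∑ ω, μ ω * Real.logb 2 (∑ ω' ∈ univ.filter (fun ω' => Z ω' = Z ω), μ ω')
        ≤ ∑ ω, μ ω * Real.logb 2 ((1:ℝ) / 2 ^ n) := Finset.sum_le_sum fun ω _ => hterm ω
    have h3 : ∑ ω, μ ω * Real.logb 2 ((1:ℝ) / 2 ^ n) = -(n : ℝ) := by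
      rw [← Finset.sum_mul, hμ1, one_mul, hlogn]
    linarith
  -- Step: decompose the cross entropy
  have hdecomp : -∑ ω, μ ω * Real.logb 2 (q (Z ω))
      = (-∑ ω, μ ω * Real.logb 2 (pY (Y ω)))
        + ∑ i, -∑ ω, μ ω * Real.logb 2 (r i (X ω i) (Y ω)) := by
    have hpt : ∀ ω, μ ω * Real.logb 2 (q (Z ω))
        = μ ω * Real.logb 2 (pY (Y ω))
          + ∑ i, μ ω * Real.logb 2 (r i (X ω i) (Y ω)) := by
      intro ω
      rcases eq_or_ne (μ ω) 0 with h | h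
      · rw [h]; simp
      · have h1 : q (Z ω) = pY (Y ω) * ∏ i, r i (X ω i) (Y ω) := by rw [hq, hZ]
        rw [h1, Real.logb_mul (ne_of_gt (hpYpos ω h))
          (ne_of_gt (Finset.prod_pos fun i _ => hμpos_correct i ω h)),
          Real.logb_prod _ _ (fun i _ => ne_of_gt (hμpos_correct i ω h)),
          mul_add, Finset.mul_sum]
    rw [Finset.sum_congr rfl (fun ω _ => hpt ω), Finset.sum_add_distrib,
      Finset.sum_comm]
    rw [neg_add]
    congr 1
    rw [← Finset.sum_neg_distrib]
  -- Step: H(Y) part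
  have hYpart : -∑ ω, μ ω * Real.logb 2 (pY (Y ω)) ≤ K := by
    have : -∑ ω, μ ω * Real.logb 2 (pY (Y ω)) = entropy μ Y := by
      rw [entropy, grouping μ Y (fun y => Real.logb 2 (pY y))]
      simp only [hpY]
    rw [this]; exact hK
  -- Step: Fano part for each coordinate
  have hFano : ∀ i : Fin n, -∑ ω, μ ω * Real.logb 2 (r i (X ω i) (Y ω)) ≤ binEnt e := by
    intro i
    set ci : ℝ := ∑ ω ∈ univ.filter (fun ω => g i (Y ω) = X ω i), μ ω with hci
    clear_value ci
    have hcige : c ≤ ci := by rw [hci]; exact hg i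
    have hcile : ci ≤ 1 := by
      rw [hci, ← hμ1]
      exact Finset.sum_le_sum_of_subset_of_nonneg (Finset.filter_subset _ _)
        (fun ω _ _ => hμ0 ω)
    have hsplit := Finset.sum_filter_add_sum_filter_not (univ : Finset Ω)
      (fun ω => g i (Y ω) = X ω i) (fun ω => μ ω * Real.logb 2 (r i (X ω i) (Y ω)))
    have hcorr : ∑ ω ∈ univ.filter (fun ω => g i (Y ω) = X ω i),
        μ ω * Real.logb 2 (r i (X ω i) (Y ω)) = ci * Real.logb 2 c := by
      rw [hci, Finset.sum_mul]
      refine Finset.sum_congr rfl fun ω hω => ?_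
      have := (Finset.mem_filter.1 hω).2
      rw [hr]; simp only [this, if_true]
    have hwrongsum : ∑ ω ∈ univ.filter (fun ω => ¬ (g i (Y ω) = X ω i)),
        μ ω * Real.logb 2 (r i (X ω i) (Y ω)) = (1 - ci) * Real.logb 2 e := by
      have hmass : ∑ ω ∈ univ.filter (fun ω => ¬ (g i (Y ω) = X ω i)), μ ω = 1 - ci := by
        have := Finset.sum_filter_add_sum_filter_not (univ : Finset Ω)
          (fun ω => g i (Y ω) = X ω i) μ
        rw [hμ1] at this
        rw [hci]; linarith
      rw [← hmass, Finset.sum_mul]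
      refine Finset.sum_congr rfl fun ω hω => ?_
      have hne := (Finset.mem_filter.1 hω).2
      rw [hr]; simp only [hne, if_false]
    have hlhs : ∑ ω, μ ω * Real.logb 2 (r i (X ω i) (Y ω))
        = ci * Real.logb 2 c + (1 - ci) * Real.logb 2 e := by
      rw [← hsplit, hcorr, hwrongsum]
    rw [hlhs]
    have hloge : Real.logb 2 e ≤ Real.logb 2 c := by
      rcases lt_or_eq_of_le he0 with h | h
      · exact Real.logb_le_logb_of_le one_lt_two h (by linarith)
      · rw [← h, Real.logb_zero]
        have : c = 1 := by linarith
        rw [this, Real.logb_one]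
    have hbe : binEnt e = -(e * Real.logb 2 e) - c * Real.logb 2 c := by
      rw [binEnt, he, hc]; ring_nf
    rw [hbe]
    have hrw : e * Real.logb 2 e = (1 - c) * Real.logb 2 e := by
      rw [show e = 1 - c by linarith]
    linarith [mul_nonneg (sub_nonneg.2 hcige) (sub_nonneg.2 hloge), hrw]
  -- combine
  have hsumFano : ∑ i : Fin n, -∑ ω, μ ω * Real.logb 2 (r i (X ω i) (Y ω))
      ≤ n * binEnt e := by
    calc ∑ i : Fin n, -∑ ω, μ ω * Real.logb 2 (r i (X ω i) (Y ω))
        ≤ ∑ _i : Fin n, binEnt e := Finset.sum_le_sum fun i _ => hFano i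
      _ = n * binEnt e := by rw [Finset.sum_const, Finset.card_univ, Fintype.card_fin,
            nsmul_eq_mul]
  calc (n : ℝ) ≤ entropy μ Z := hstep1
    _ ≤ -∑ ω, μ ω * Real.logb 2 (q (Z ω)) := hgibbs
    _ = (-∑ ω, μ ω * Real.logb 2 (pY (Y ω)))
        + ∑ i, -∑ ω, μ ω * Real.logb 2 (r i (X ω i) (Y ω)) := hdecomp
    _ ≤ K + n * binEnt e := add_le_add hYpart hsumFano
    _ = n * binEnt e + K := by ring
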